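/- Let 0 < β₀ ≤ β₁, c₀ > 0, M ≥ 0, a₀, a₁ ∈ ℝ, and let u : ℝ² → ℝ be differentiable with ‖∇u(x)‖ ≤ M for almost every x ∈ Ω and ∫_Ω ‖∇u‖² dx < ∞. Suppose that for every h ∈ (0,1] we are given: a measurable set ω_h ⊆ Ω with μ(ω_h) ≤ c₀ h²; a measurable function ã_h : ℝ² → ℝ with ã_h = a on Ω \ ω_h, ã_h − a = a₀ − a₁ on ω_h, and β₀ ≤ a(x) ≤ β₁, β₀ ≤ ã_h(x) ≤ β₁ on Ω; and a differentiable ũ_h : ℝ² → ℝ with B(u,u) = B̃_h(ũ_h,u) and B(u,ũ_h) = B̃_h(ũ_h,ũ_h), where B̃_h(v,w) := ∫_Ω ã_h ⟨∇v,∇w⟩ dx. Then there exists a constant C ≥ 0 such that for all h ∈ (0,1]: |∫_Ω a ‖∇u‖² dx − ∫_Ω ã_h ‖∇ũ_h‖² dx| ≤ C h². -/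

import Mathlib

open MeasureTheory
open scoped RealInnerProductSpace

set_option maxHeartbeats 1000000 in
theorem stmt_8
    (Ω : Set (EuclideanSpace ℝ (Fin 2)))
    (hΩmeas : MeasurableSet Ω) (hΩfin : volume Ω < ⊤)
    (a : EuclideanSpace ℝ (Fin 2) → ℝ) (hameas : Measurable a)
    (β₀ β₁ : ℝ) (hβ₀ : 0 < β₀) (hβ : β₀ ≤ β₁)
    (c₀ M a₀ a₁ : ℝ) (hc₀ : 0 < c₀) (hM0 : 0 ≤ M)
    (u : EuclideanSpace ℝ (Fin 2) → ℝ) (hu : Differentiable ℝ u)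
    (hM : ∀ᵐ x ∂volume.restrict Ω, ‖gradient u x‖ ≤ M)
    (huint : IntegrableOn (fun x => ‖gradient u x‖ ^ 2) Ω)
    (ha_bdd : ∀ x ∈ Ω, β₀ ≤ a x ∧ a x ≤ β₁)
    (hauint : IntegrableOn (fun x => a x * ‖gradient u x‖ ^ 2) Ω)
    (ω : ℝ → Set (EuclideanSpace ℝ (Fin 2)))
    (atil : ℝ → EuclideanSpace ℝ (Fin 2) → ℝ)
    (util : ℝ → EuclideanSpace ℝ (Fin 2) → ℝ)
    (hωmeas : ∀ h ∈ Set.Ioc (0:ℝ) 1, MeasurableSet (ω h))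
    (hωsub : ∀ h ∈ Set.Ioc (0:ℝ) 1, ω h ⊆ Ω)
    (hωvol : ∀ h ∈ Set.Ioc (0:ℝ) 1, (volume (ω h)).toReal ≤ c₀ * h ^ 2)
    (hatilmeas : ∀ h ∈ Set.Ioc (0:ℝ) 1, Measurable (atil h))
    (hatil_eq : ∀ h ∈ Set.Ioc (0:ℝ) 1, ∀ x ∈ Ω \ ω h, atil h x = a x)
    (hatil_diff : ∀ h ∈ Set.Ioc (0:ℝ) 1, ∀ x ∈ ω h, atil h x - a x = a₀ - a₁)
    (hatil_bdd : ∀ h ∈ Set.Ioc (0:ℝ) 1, ∀ x ∈ Ω, β₀ ≤ atil h x ∧ atil h x ≤ β₁)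
    (hutil : ∀ h ∈ Set.Ioc (0:ℝ) 1, Differentiable ℝ (util h))
    (hint : ∀ h ∈ Set.Ioc (0:ℝ) 1,
        IntegrableOn (fun x => atil h x * ‖gradient (util h) x‖ ^ 2) Ω ∧
        IntegrableOn (fun x => atil h x * ⟪gradient (util h) x, gradient u x⟫) Ω ∧
        IntegrableOn (fun x => a x * ⟪gradient u x, gradient (util h) x⟫) Ω ∧
        IntegrableOn (fun x => ‖gradient (util h) x‖ ^ 2) Ω)
    (hB1 : ∀ h ∈ Set.Ioc (0:ℝ) 1,
        (∫ x in Ω, a x * ‖gradient u x‖ ^ 2)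
          = ∫ x in Ω, atil h x * ⟪gradient (util h) x, gradient u x⟫)
    (hB2 : ∀ h ∈ Set.Ioc (0:ℝ) 1,
        (∫ x in Ω, a x * ⟪gradient u x, gradient (util h) x⟫)
          = ∫ x in Ω, atil h x * ‖gradient (util h) x‖ ^ 2) :
    ∃ C : ℝ, 0 ≤ C ∧ ∀ h ∈ Set.Ioc (0:ℝ) 1,
      |(∫ x in Ω, a x * ‖gradient u x‖ ^ 2)
          - ∫ x in Ω, atil h x * ‖gradient (util h) x‖ ^ 2| ≤ C * h ^ 2 := by
  set α := |a₀ - a₁| with hαdef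
  have hα0 : 0 ≤ α := abs_nonneg _
  refine ⟨α * c₀ * (3 * M ^ 2 / 2 + α ^ 2 * M ^ 2 / (2 * β₀ ^ 2)), by positivity, ?_⟩
  intro h hh
  obtain ⟨hint1, hint2, hint3, hint4⟩ := hint h hh
  have hb1 := hB1 h hh
  have hb2 := hB2 h hh
  set g := gradient u with hgdef
  set gt := gradient (util h) with hgtdef
  set v : EuclideanSpace ℝ (Fin 2) → EuclideanSpace ℝ (Fin 2) :=
    fun x => g x - gt x with hvdef
  have hωm := hωmeas h hh
  have hωs := hωsub h hh
  have hωfin : volume (ω h) < ⊤ := lt_of_le_of_lt (measure_mono hωs) hΩfin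
  have hμω0 : 0 ≤ (volume (ω h)).toReal := ENNReal.toReal_nonneg
  have hμω : (volume (ω h)).toReal ≤ c₀ * h ^ 2 := hωvol h hh
  have haea : ∀ᵐ x ∂volume.restrict Ω, x ∈ Ω := ae_restrict_mem hΩmeas
  have hatbd : ∀ᵐ x ∂volume.restrict Ω, ‖atil h x‖ ≤ β₁ := by
    filter_upwards [haea] with x hx
    have := hatil_bdd h hh x hx
    rw [Real.norm_eq_abs, abs_le]; constructor <;> linarith
  have hatambd : ∀ᵐ x ∂volume.restrict Ω, ‖atil h x - a x‖ ≤ 2 * β₁ := by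
    filter_upwards [haea] with x hx
    have h1 := ha_bdd x hx
    have h2 := hatil_bdd h hh x hx
    rw [Real.norm_eq_abs, abs_le]; constructor <;> linarith
  -- integrability of the plain inner product
  have hinner_int : IntegrableOn (fun x => ⟪g x, gt x⟫) Ω := by
    have h1 : IntegrableOn (fun x => (a x)⁻¹ * (a x * ⟪g x, gt x⟫)) Ω := by
      refine Integrable.bdd_mul (c := β₀⁻¹) hint3 hameas.inv.aestronglyMeasurable ?_
      filter_upwards [haea] with x hx
      have h2 := (ha_bdd x hx).1
      have h3 : 0 < a x := lt_of_lt_of_le hβ₀ h2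
      rw [Real.norm_eq_abs, abs_of_nonneg (inv_nonneg.mpr h3.le)]
      exact inv_anti₀ hβ₀ h2
    refine h1.congr ?_
    filter_upwards [haea] with x hx
    have h2 : a x ≠ 0 := ne_of_gt (lt_of_lt_of_le hβ₀ (ha_bdd x hx).1)
    field_simp
  have hvsq_eq : (fun x => ‖v x‖ ^ 2)
      = fun x => ‖g x‖ ^ 2 - 2 * ⟪g x, gt x⟫ + ‖gt x‖ ^ 2 := by
    funext x; exact norm_sub_sq_real _ _
  have hvint : IntegrableOn (fun x => ‖v x‖ ^ 2) Ω := by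
    rw [hvsq_eq]
    exact (huint.sub (hinner_int.const_mul 2)).add hint4
  have hatm := (hatilmeas h hh).aestronglyMeasurable (μ := volume.restrict Ω)
  have hA3int : IntegrableOn (fun x => atil h x * ‖g x‖ ^ 2) Ω :=
    Integrable.bdd_mul huint hatm hatbd
  have hB1int : IntegrableOn (fun x => atil h x * ⟪g x, gt x⟫) Ω :=
    Integrable.bdd_mul hinner_int hatm hatbd
  have hatvint : IntegrableOn (fun x => atil h x * ‖v x‖ ^ 2) Ω :=
    Integrable.bdd_mul hvint hatm hatbd
  -- abbreviations for the integrals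
  set A1 := ∫ x in Ω, a x * ‖g x‖ ^ 2 with hA1def
  set A2 := ∫ x in Ω, atil h x * ‖gt x‖ ^ 2 with hA2def
  set A3 := ∫ x in Ω, atil h x * ‖g x‖ ^ 2 with hA3def
  set B1 := ∫ x in Ω, atil h x * ⟪g x, gt x⟫ with hB1def
  set B2 := ∫ x in Ω, a x * ⟪g x, gt x⟫ with hB2def
  set E := ∫ x in Ω, atil h x * ‖v x‖ ^ 2 with hEdef
  set N := ∫ x in Ω, ‖v x‖ ^ 2 with hNdef
  have hN0 : 0 ≤ N := by
    rw [hNdef]; apply integral_nonneg; intro x; positivity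
  have hB1' : A1 = B1 := by
    rw [hb1, hB1def]
    congr 1; funext x; rw [real_inner_comm]
  have hB2' : B2 = A2 := hb2
  -- expansion of E
  have hE1 : E = A3 - 2 * B1 + A2 := by
    have heq : (fun x => atil h x * ‖v x‖ ^ 2)
        = fun x => (atil h x * ‖g x‖ ^ 2 - 2 * (atil h x * ⟪g x, gt x⟫))
            + atil h x * ‖gt x‖ ^ 2 := by
      funext x
      have hx : ‖v x‖ ^ 2 = ‖g x‖ ^ 2 - 2 * ⟪g x, gt x⟫ + ‖gt x‖ ^ 2 :=
        norm_sub_sq_real _ _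
      rw [hx]; ring
    have hsubint : IntegrableOn
        (fun x => atil h x * ‖g x‖ ^ 2 - 2 * (atil h x * ⟪g x, gt x⟫)) Ω :=
      hA3int.sub (hB1int.const_mul 2)
    rw [hEdef, heq, integral_add hsubint hint1,
      integral_sub hA3int (hB1int.const_mul 2), integral_const_mul]
  -- pointwise identity for the inner product with v
  have hgv : ∀ x, ⟪g x, v x⟫ = ‖g x‖ ^ 2 - ⟪g x, gt x⟫ := by
    intro x
    show ⟪g x, g x - gt x⟫ = _
    rw [inner_sub_right, real_inner_self_eq_norm_sq]
  have hgvint : IntegrableOn (fun x => ⟪g x, v x⟫) Ω := by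
    have heq : (fun x => ⟪g x, v x⟫) = fun x => ‖g x‖ ^ 2 - ⟪g x, gt x⟫ :=
      funext hgv
    rw [heq]; exact huint.sub hinner_int
  -- localization: integrals of (atil - a) * f concentrate on ω h
  have hloc : ∀ f : EuclideanSpace ℝ (Fin 2) → ℝ, IntegrableOn f Ω →
      (∫ x in Ω, (atil h x - a x) * f x) = ∫ x in ω h, (a₀ - a₁) * f x := by
    intro f hf
    have hfint : IntegrableOn (fun x => (atil h x - a x) * f x) Ω :=
      Integrable.bdd_mul hf (hatm.sub hameas.aestronglyMeasurable) hatambd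
    have hdiff0 : (∫ x in Ω \ ω h, (atil h x - a x) * f x) = 0 := by
      rw [setIntegral_congr_fun (hΩmeas.diff hωm)
        (g := fun _ => (0:ℝ)) (fun x hx => by rw [hatil_eq h hh x hx]; ring)]
      simp
    have hsplit := integral_diff hωm hfint hωs
    rw [hdiff0] at hsplit
    have h2 : (∫ x in ω h, (atil h x - a x) * f x)
        = ∫ x in ω h, (a₀ - a₁) * f x :=
      setIntegral_congr_fun hωm (fun x hx => by rw [hatil_diff h hh x hx])
    linarith
  -- energy identity
  have hFexp : (∫ x in Ω, (atil h x - a x) * ⟪g x, v x⟫)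
      = A3 - B1 - (A1 - B2) := by
    have heq : (fun x => (atil h x - a x) * ⟪g x, v x⟫)
        = fun x => (atil h x * ‖g x‖ ^ 2 - atil h x * ⟪g x, gt x⟫)
            - (a x * ‖g x‖ ^ 2 - a x * ⟪g x, gt x⟫) := by
      funext x; rw [hgv x]; ring
    have hd1 : IntegrableOn
        (fun x => atil h x * ‖g x‖ ^ 2 - atil h x * ⟪g x, gt x⟫) Ω :=
      hA3int.sub hB1int
    have hd2 : IntegrableOn
        (fun x => a x * ‖g x‖ ^ 2 - a x * ⟪g x, gt x⟫) Ω :=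
      hauint.sub hint3
    rw [heq, integral_sub hd1 hd2,
      integral_sub hA3int hB1int, integral_sub hauint hint3]
  have hEeq : E = (a₀ - a₁) * ∫ x in ω h, ⟪g x, v x⟫ := by
    have h1 := hloc _ hgvint
    rw [hFexp, integral_const_mul] at h1
    rw [hE1]
    linarith [hB1', hB2']
  -- a.e. gradient bound on ω h
  have hMω : ∀ᵐ x ∂volume.restrict (ω h), ‖g x‖ ≤ M :=
    ae_restrict_of_ae_restrict_of_subset hωs hM
  have hvω : IntegrableOn (fun x => ‖v x‖ ^ 2) (ω h) := hvint.mono_set hωs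
  have hωN : (∫ x in ω h, ‖v x‖ ^ 2) ≤ N := by
    rw [hNdef]
    refine setIntegral_mono_set hvint ?_ (HasSubset.Subset.eventuallyLE hωs)
    exact Filter.Eventually.of_forall fun x => by positivity
  have hωNN : 0 ≤ ∫ x in ω h, ‖v x‖ ^ 2 :=
    integral_nonneg fun x => by positivity
  -- bound |E|
  have hEbd : |E| ≤ (volume (ω h)).toReal * (α ^ 2 * M ^ 2 / (2 * β₀))
      + β₀ / 2 * ∫ x in ω h, ‖v x‖ ^ 2 := by
    have hbint : IntegrableOn
        (fun x => α ^ 2 * M ^ 2 / (2 * β₀) + β₀ / 2 * ‖v x‖ ^ 2) (ω h) :=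
      (integrableOn_const hωfin.ne).add (hvω.const_mul _)
    have hub : ∀ᵐ x ∂volume.restrict (ω h),
        ‖(a₀ - a₁) * ⟪g x, v x⟫‖
          ≤ α ^ 2 * M ^ 2 / (2 * β₀) + β₀ / 2 * ‖v x‖ ^ 2 := by
      filter_upwards [hMω] with x hx
      have h1 : |⟪g x, v x⟫| ≤ ‖g x‖ * ‖v x‖ := abs_real_inner_le_norm _ _
      have h2 : 0 ≤ ‖v x‖ := norm_nonneg _
      have h4 : |⟪g x, v x⟫| ≤ M * ‖v x‖ :=
        le_trans h1 (mul_le_mul_of_nonneg_right hx h2)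
      rw [norm_mul, Real.norm_eq_abs, Real.norm_eq_abs, ← hαdef]
      have h5 : α * |⟪g x, v x⟫| ≤ α * (M * ‖v x‖) :=
        mul_le_mul_of_nonneg_left h4 hα0
      have h6 : α * (M * ‖v x‖) ≤ α ^ 2 * M ^ 2 / (2 * β₀) + β₀ / 2 * ‖v x‖ ^ 2 := by
        rw [div_add' _ _ _ (by positivity : (2*β₀) ≠ 0)]
        rw [le_div_iff₀ (by positivity : (0:ℝ) < 2*β₀)]
        nlinarith [sq_nonneg (α * M - β₀ * ‖v x‖)]
      linarith
    have hnorm := norm_integral_le_of_norm_le hbint hub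
    rw [integral_add (integrableOn_const hωfin.ne enorm_ne_top :
        Integrable (fun _ : EuclideanSpace ℝ (Fin 2) => α ^ 2 * M ^ 2 / (2 * β₀)) (volume.restrict (ω h))) (hvω.const_mul _),
      setIntegral_const, smul_eq_mul, integral_const_mul, integral_const_mul] at hnorm
    calc |E| = ‖(a₀ - a₁) * ∫ x in ω h, ⟪g x, v x⟫‖ := by
          rw [hEeq, Real.norm_eq_abs]
      _ ≤ _ := hnorm
  -- coercivity
  have hcoerc : β₀ * N ≤ E := by
    rw [hNdef, hEdef, ← integral_const_mul]
    refine setIntegral_mono_on (hvint.const_mul _) hatvint hΩmeas fun x hx => ?_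
    exact mul_le_mul_of_nonneg_right (hatil_bdd h hh x hx).1 (by positivity)
  have hEabs : E ≤ |E| := le_abs_self _
  have hkey : β₀ / 2 * N ≤ α ^ 2 * M ^ 2 / (2 * β₀) * (volume (ω h)).toReal := by
    nlinarith [hωN, hcoerc, hEabs, hEbd, hβ₀]
  have hNbd : N ≤ α ^ 2 * M ^ 2 / β₀ ^ 2 * (volume (ω h)).toReal := by
    have hb2 : (0:ℝ) < β₀ / 2 := by positivity
    have hβne : β₀ ≠ 0 := ne_of_gt hβ₀
    calc N = (β₀ / 2)⁻¹ * (β₀ / 2 * N) := by field_simp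
      _ ≤ (β₀ / 2)⁻¹ * (α ^ 2 * M ^ 2 / (2 * β₀) * (volume (ω h)).toReal) :=
          mul_le_mul_of_nonneg_left hkey (by positivity)
      _ = α ^ 2 * M ^ 2 / β₀ ^ 2 * (volume (ω h)).toReal := by
          field_simp
  -- main difference identity
  have hD : A1 - A2 = (a₀ - a₁) * ∫ x in ω h, ⟪g x, gt x⟫ := by
    have h1 : A1 - A2 = B1 - B2 := by rw [hB1', hB2']
    have h2 : B1 - B2 = ∫ x in Ω, (atil h x - a x) * ⟪g x, gt x⟫ := by
      rw [hB1def, hB2def, ← integral_sub hB1int hint3]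
      congr 1; funext x; ring
    rw [h1, h2, hloc _ hinner_int, integral_const_mul]
  -- final bound
  have hfinal : |A1 - A2|
      ≤ (volume (ω h)).toReal * (α * (3 * M ^ 2 / 2))
        + α / 2 * ∫ x in ω h, ‖v x‖ ^ 2 := by
    have hbint : IntegrableOn
        (fun x => α * (3 * M ^ 2 / 2) + α / 2 * ‖v x‖ ^ 2) (ω h) :=
      (integrableOn_const hωfin.ne).add (hvω.const_mul _)
    have hub : ∀ᵐ x ∂volume.restrict (ω h),
        ‖(a₀ - a₁) * ⟪g x, gt x⟫‖
          ≤ α * (3 * M ^ 2 / 2) + α / 2 * ‖v x‖ ^ 2 := by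
      filter_upwards [hMω] with x hx
      have h1 : |⟪g x, v x⟫| ≤ M * ‖v x‖ :=
        le_trans (abs_real_inner_le_norm _ _)
          (mul_le_mul_of_nonneg_right hx (norm_nonneg _))
      have h2 : |⟪g x, gt x⟫| ≤ M ^ 2 + M * ‖v x‖ := by
        have h3 : ⟪g x, gt x⟫ = ‖g x‖ ^ 2 - ⟪g x, v x⟫ := by
          have := hgv x; linarith
        have h4 : ‖g x‖ ^ 2 ≤ M ^ 2 := by nlinarith [norm_nonneg (g x)]
        rw [h3]
        calc |‖g x‖ ^ 2 - ⟪g x, v x⟫| ≤ |‖g x‖ ^ 2| + |⟪g x, v x⟫| :=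
              abs_sub _ _
          _ ≤ M ^ 2 + M * ‖v x‖ := by
              rw [abs_of_nonneg (by positivity : (0:ℝ) ≤ ‖g x‖ ^ 2)]; linarith
      rw [norm_mul, Real.norm_eq_abs, Real.norm_eq_abs, ← hαdef]
      have h5 : α * |⟪g x, gt x⟫| ≤ α * (M ^ 2 + M * ‖v x‖) :=
        mul_le_mul_of_nonneg_left h2 hα0
      have h6 : α * (M ^ 2 + M * ‖v x‖)
          ≤ α * (3 * M ^ 2 / 2) + α / 2 * ‖v x‖ ^ 2 := by
        nlinarith [sq_nonneg (M - ‖v x‖), hα0]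
      linarith
    have hnorm := norm_integral_le_of_norm_le hbint hub
    rw [integral_add (integrableOn_const hωfin.ne enorm_ne_top :
        Integrable (fun _ : EuclideanSpace ℝ (Fin 2) => α * (3 * M ^ 2 / 2)) (volume.restrict (ω h))) (hvω.const_mul _),
      setIntegral_const, smul_eq_mul, integral_const_mul, integral_const_mul] at hnorm
    calc |A1 - A2| = ‖(a₀ - a₁) * ∫ x in ω h, ⟪g x, gt x⟫‖ := by
          rw [hD, Real.norm_eq_abs]
      _ ≤ _ := hnorm
  have hN2 : α / 2 * (∫ x in ω h, ‖v x‖ ^ 2)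
      ≤ α / 2 * (α ^ 2 * M ^ 2 / β₀ ^ 2 * (volume (ω h)).toReal) :=
    mul_le_mul_of_nonneg_left (le_trans hωN hNbd) (by positivity)
  have hcoef : 0 ≤ α * (3 * M ^ 2 / 2 + α ^ 2 * M ^ 2 / (2 * β₀ ^ 2)) := by positivity
  have hstep : (volume (ω h)).toReal * (α * (3 * M ^ 2 / 2))
      + α / 2 * (α ^ 2 * M ^ 2 / β₀ ^ 2 * (volume (ω h)).toReal)
      = α * (3 * M ^ 2 / 2 + α ^ 2 * M ^ 2 / (2 * β₀ ^ 2)) * (volume (ω h)).toReal := by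
    field_simp
  have hlast : α * (3 * M ^ 2 / 2 + α ^ 2 * M ^ 2 / (2 * β₀ ^ 2)) * (volume (ω h)).toReal
      ≤ α * (3 * M ^ 2 / 2 + α ^ 2 * M ^ 2 / (2 * β₀ ^ 2)) * (c₀ * h ^ 2) :=
    mul_le_mul_of_nonneg_left hμω hcoef
  calc |A1 - A2| ≤ _ := hfinal
    _ ≤ (volume (ω h)).toReal * (α * (3 * M ^ 2 / 2))
        + α / 2 * (α ^ 2 * M ^ 2 / β₀ ^ 2 * (volume (ω h)).toReal) := by linarith
    _ = _ := hstep
    _ ≤ α * (3 * M ^ 2 / 2 + α ^ 2 * M ^ 2 / (2 * β₀ ^ 2)) * (c₀ * h ^ 2) := hlast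
    _ = α * c₀ * (3 * M ^ 2 / 2 + α ^ 2 * M ^ 2 / (2 * β₀ ^ 2)) * h ^ 2 := by ring
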